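/- The complete bipartite graph K_{2,6} is B_1-EPG_t: there exists a family of paths on the triangular grid, each with at most one bend, whose edge-intersection graph is K_{2,6}. -/

import Mathlib

/-- The triangular grid: the simple graph on `ℤ × ℤ` where two points are adjacent
iff their difference is `±(1,0)`, `±(0,1)` or `±(1,1)`. -/
def TGrid : SimpleGraph (ℤ × ℤ) where
  Adj u v :=
    (v.1 - u.1 = 1 ∧ v.2 - u.2 = 0) ∨ (v.1 - u.1 = -1 ∧ v.2 - u.2 = 0) ∨
    (v.1 - u.1 = 0 ∧ v.2 - u.2 = 1) ∨ (v.1 - u.1 = 0 ∧ v.2 - u.2 = -1) ∨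
    (v.1 - u.1 = 1 ∧ v.2 - u.2 = 1) ∨ (v.1 - u.1 = -1 ∧ v.2 - u.2 = -1)
  symm := ⟨by intro u v h; omega⟩
  loopless := ⟨by intro u h; omega⟩

/-- The (symmetric) direction datum of a grid edge: the pair of absolute coordinate
differences.  For grid edges this is `(1,0)` (horizontal), `(0,1)` (vertical) or
`(1,1)` (diagonal). -/
def edir (e : Sym2 (ℤ × ℤ)) : ℤ × ℤ :=
  Sym2.lift ⟨fun u v => (|u.1 - v.1|, |u.2 - v.2|), by
    intro u v; simp [abs_sub_comm]⟩ e

/-- The `t`-th edge of a walk. -/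
def wEdge {u v : ℤ × ℤ} (p : TGrid.Walk u v) (t : ℕ) : Sym2 (ℤ × ℤ) :=
  s(p.getVert t, p.getVert (t + 1))

/-- The number of bends of a walk: the number of consecutive pairs of edges with
different directions. -/
def bendCount {u v : ℤ × ℤ} (p : TGrid.Walk u v) : ℕ :=
  (List.range (p.length - 1)).countP
    (fun i => decide (edir (wEdge p i) ≠ edir (wEdge p (i + 1))))

/-- `b` is a bend point of the walk `p`. -/
def IsBendAt {u v : ℤ × ℤ} (p : TGrid.Walk u v) (b : ℤ × ℤ) : Prop :=
  ∃ i : ℕ, i + 2 ≤ p.length ∧ p.getVert (i + 1) = b ∧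
    edir (wEdge p i) ≠ edir (wEdge p (i + 1))

/-- A (nontrivial simple) path on the triangular grid. -/
structure TPath where
  src : ℤ × ℤ
  dst : ℤ × ℤ
  walk : TGrid.Walk src dst
  isPath : walk.IsPath
  nontriv : 0 < walk.length

/-- The set of grid edges of a path. -/
def pEdges (P : TPath) : Set (Sym2 (ℤ × ℤ)) := {e | e ∈ P.walk.edges}

/-- The set of grid points of a path. -/
def pPts (P : TPath) : Set (ℤ × ℤ) := {q | q ∈ P.walk.support}

/-- A segment of a path: a maximal straight (bend-free) subpath, recorded by the
interval of edge indices `[i, j)` it occupies. -/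
structure Segment (P : TPath) where
  i : ℕ
  j : ℕ
  lt : i < j
  le : j ≤ P.walk.length
  straight : ∀ t, i ≤ t → t < j → edir (wEdge P.walk t) = edir (wEdge P.walk i)
  maxLeft : i = 0 ∨ edir (wEdge P.walk (i - 1)) ≠ edir (wEdge P.walk i)
  maxRight : j = P.walk.length ∨ edir (wEdge P.walk (j - 1)) ≠ edir (wEdge P.walk j)

/-- The set of grid edges of a segment. -/
def Segment.edges {P : TPath} (s : Segment P) : Set (Sym2 (ℤ × ℤ)) :=
  {e | ∃ t, s.i ≤ t ∧ t < s.j ∧ e = wEdge P.walk t}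

/-- The set of grid points of a segment. -/
def Segment.pts {P : TPath} (s : Segment P) : Set (ℤ × ℤ) :=
  {q | ∃ t, s.i ≤ t ∧ t ≤ s.j ∧ q = P.walk.getVert t}

/-- The direction of a segment. -/
def Segment.dir {P : TPath} (s : Segment P) : ℤ × ℤ := edir (wEdge P.walk s.i)

/-- The three directions of the triangular grid. -/
inductive Dir | H | V | D
deriving DecidableEq

/-- The direction of the (straight) line from `a` to `b`. -/
def dirOf (a b : ℤ × ℤ) : Dir :=
  if a.2 = b.2 then .H else if a.1 = b.1 then .V else .D

/-- A grid line of the triangular grid: a full horizontal, vertical or diagonal line. -/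
structure GridLine where
  dir : Dir
  c : ℤ

/-- The parametrization of the points of a grid line. -/
def GridLine.pt (l : GridLine) (t : ℤ) : ℤ × ℤ :=
  match l.dir with
  | .H => (t, l.c)
  | .V => (l.c, t)
  | .D => (l.c + t, t)

/-- The `t`-th edge of a grid line. -/
def GridLine.edge (l : GridLine) (t : ℤ) : Sym2 (ℤ × ℤ) := s(l.pt t, l.pt (t + 1))

/-- The set of grid points of a grid line. -/
def GridLine.pts (l : GridLine) : Set (ℤ × ℤ) := Set.range l.pt

/-- The set of grid edges of a grid line. -/
def GridLine.edges (l : GridLine) : Set (Sym2 (ℤ × ℤ)) := Set.range l.edge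

/-- A right triangle of the triangular grid, given by a base corner `p`, a leg
length `k ≥ 1`, and one of the two possible orientations. -/
structure RightTri where
  p : ℤ × ℤ
  k : ℤ
  hk : 1 ≤ k
  orientA : Bool

/-- The set of grid edges of a right triangle. -/
def RightTri.edges (T : RightTri) : Set (Sym2 (ℤ × ℤ)) :=
  if T.orientA then
    {e | ∃ t : ℤ, 0 ≤ t ∧ t < T.k ∧
      (e = s((T.p.1 + t, T.p.2), (T.p.1 + t + 1, T.p.2)) ∨
       e = s((T.p.1 + T.k, T.p.2 + t), (T.p.1 + T.k, T.p.2 + t + 1)) ∨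
       e = s((T.p.1 + t, T.p.2 + t), (T.p.1 + t + 1, T.p.2 + t + 1)))}
  else
    {e | ∃ t : ℤ, 0 ≤ t ∧ t < T.k ∧
      (e = s((T.p.1, T.p.2 + t), (T.p.1, T.p.2 + t + 1)) ∨
       e = s((T.p.1 + t, T.p.2 + T.k), (T.p.1 + t + 1, T.p.2 + T.k)) ∨
       e = s((T.p.1 + t, T.p.2 + t), (T.p.1 + t + 1, T.p.2 + t + 1)))}

/-- The three corners of a right triangle. -/
def RightTri.corners (T : RightTri) : Set (ℤ × ℤ) :=
  if T.orientA then {T.p, (T.p.1 + T.k, T.p.2), (T.p.1 + T.k, T.p.2 + T.k)}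
  else {T.p, (T.p.1, T.p.2 + T.k), (T.p.1 + T.k, T.p.2 + T.k)}

/-- `U(𝒫)`: the subgraph of the grid formed by all segments of members of the family
that share at least one grid edge with another member, given by its set of edges. -/
def UEdges {ι : Type} (P : ι → TPath) : Set (Sym2 (ℤ × ℤ)) :=
  {e | ∃ i : ι, ∃ s : Segment (P i), e ∈ s.edges ∧
        ∃ j : ι, j ≠ i ∧ (s.edges ∩ pEdges (P j)).Nonempty}

/-- A B₁-EPGₜ representation of a simple graph `G`: a family of at most-one-bend
paths on the triangular grid whose edge-intersection graph is `G`. -/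
def IsB1EPGtRep {V : Type} (G : SimpleGraph V) (Rep : V → TPath) : Prop :=
  (∀ v, bendCount (Rep v).walk ≤ 1) ∧
  ∀ u v : V, u ≠ v → (G.Adj u v ↔ (pEdges (Rep u) ∩ pEdges (Rep v)).Nonempty)

/- ==================== auxiliary construction ==================== -/

instance : DecidableRel TGrid.Adj := fun u v =>
  inferInstanceAs (Decidable ((v.1 - u.1 = 1 ∧ v.2 - u.2 = 0) ∨ (v.1 - u.1 = -1 ∧ v.2 - u.2 = 0) ∨
    (v.1 - u.1 = 0 ∧ v.2 - u.2 = 1) ∨ (v.1 - u.1 = 0 ∧ v.2 - u.2 = -1) ∨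
    (v.1 - u.1 = 1 ∧ v.2 - u.2 = 1) ∨ (v.1 - u.1 = -1 ∧ v.2 - u.2 = -1)))

/-- Host path A0: horizontal along row 0 then diagonal down-left. -/
def wA0 : TGrid.Walk ((-3:ℤ),(0:ℤ)) ((-1:ℤ),(-3:ℤ)) :=
  .cons (v := (-2,0)) (by decide) (.cons (v := (-1,0)) (by decide)
  (.cons (v := (0,0)) (by decide) (.cons (v := (1,0)) (by decide)
  (.cons (v := (2,0)) (by decide) (.cons (v := (1,-1)) (by decide)
  (.cons (v := (0,-2)) (by decide) (.cons (v := (-1,-3)) (by decide) .nil)))))))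

/-- Host path A1: vertical along column 0 then diagonal down-left. -/
def wA1 : TGrid.Walk ((0:ℤ),(-3:ℤ)) ((-3:ℤ),(-1:ℤ)) :=
  .cons (v := (0,-2)) (by decide) (.cons (v := (0,-1)) (by decide)
  (.cons (v := (0,0)) (by decide) (.cons (v := (0,1)) (by decide)
  (.cons (v := (0,2)) (by decide) (.cons (v := (-1,1)) (by decide)
  (.cons (v := (-2,0)) (by decide) (.cons (v := (-3,-1)) (by decide) .nil)))))))

def wP1 : TGrid.Walk ((-1:ℤ),(0:ℤ)) ((0:ℤ),(1:ℤ)) :=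
  .cons (v := (0,0)) (by decide) (.cons (v := (0,1)) (by decide) .nil)
def wP2 : TGrid.Walk ((1:ℤ),(0:ℤ)) ((0:ℤ),(-1:ℤ)) :=
  .cons (v := (0,0)) (by decide) (.cons (v := (0,-1)) (by decide) .nil)
def wP3 : TGrid.Walk ((-3:ℤ),(0:ℤ)) ((-1:ℤ),(1:ℤ)) :=
  .cons (v := (-2,0)) (by decide) (.cons (v := (-1,1)) (by decide) .nil)
def wP4 : TGrid.Walk ((-1:ℤ),(0:ℤ)) ((-3:ℤ),(-1:ℤ)) :=
  .cons (v := (-2,0)) (by decide) (.cons (v := (-3,-1)) (by decide) .nil)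
def wP5 : TGrid.Walk ((1:ℤ),(-1:ℤ)) ((0:ℤ),(-3:ℤ)) :=
  .cons (v := (0,-2)) (by decide) (.cons (v := (0,-3)) (by decide) .nil)
def wP6 : TGrid.Walk ((-1:ℤ),(-3:ℤ)) ((0:ℤ),(-1:ℤ)) :=
  .cons (v := (0,-2)) (by decide) (.cons (v := (0,-1)) (by decide) .nil)

def tpA0 : TPath := ⟨_, _, wA0, by rw [SimpleGraph.Walk.isPath_def]; decide, by decide⟩
def tpA1 : TPath := ⟨_, _, wA1, by rw [SimpleGraph.Walk.isPath_def]; decide, by decide⟩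
def tpP1 : TPath := ⟨_, _, wP1, by rw [SimpleGraph.Walk.isPath_def]; decide, by decide⟩
def tpP2 : TPath := ⟨_, _, wP2, by rw [SimpleGraph.Walk.isPath_def]; decide, by decide⟩
def tpP3 : TPath := ⟨_, _, wP3, by rw [SimpleGraph.Walk.isPath_def]; decide, by decide⟩
def tpP4 : TPath := ⟨_, _, wP4, by rw [SimpleGraph.Walk.isPath_def]; decide, by decide⟩
def tpP5 : TPath := ⟨_, _, wP5, by rw [SimpleGraph.Walk.isPath_def]; decide, by decide⟩
def tpP6 : TPath := ⟨_, _, wP6, by rw [SimpleGraph.Walk.isPath_def]; decide, by decide⟩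

instance instDisjDec (l1 l2 : List (Sym2 (ℤ × ℤ))) : Decidable (l1.Disjoint l2) :=
  decidable_of_iff (∀ a ∈ l1, a ∉ l2) List.disjoint_left.symm

lemma not_nonempty_of_disjoint (P Q : TPath)
    (h : P.walk.edges.Disjoint Q.walk.edges) : ¬ (pEdges P ∩ pEdges Q).Nonempty := by
  rintro ⟨e, he1, he2⟩; exact h he1 he2

lemma nonempty_of_not_disjoint (P Q : TPath)
    (h : ¬ P.walk.edges.Disjoint Q.walk.edges) : (pEdges P ∩ pEdges Q).Nonempty := by
  rw [List.disjoint_left] at h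
  push_neg at h
  obtain ⟨e, h1, h2⟩ := h
  exact ⟨e, h1, h2⟩

/-- The complete bipartite graph `K_{2,6}` is B₁-EPGₜ. -/
theorem stmt15 :
    ∃ Rep : (Fin 2 ⊕ Fin 6) → TPath,
      IsB1EPGtRep (completeBipartiteGraph (Fin 2) (Fin 6)) Rep := by
  refine ⟨Sum.elim ![tpA0, tpA1] ![tpP1, tpP2, tpP3, tpP4, tpP5, tpP6], ?_, ?_⟩
  · rintro (a | b)
    · fin_cases a <;> decide
    · fin_cases b <;> decide
  · rintro (a | a) (b | b) huv <;> fin_cases a <;> fin_cases b <;>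
      first
        | exact absurd rfl huv
        | exact iff_of_true (by simp [completeBipartiteGraph])
            (nonempty_of_not_disjoint _ _ (by decide))
        | exact iff_of_false (by simp [completeBipartiteGraph])
            (not_nonempty_of_disjoint _ _ (by decide))
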